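/- Let 𝒜 ⊆ M_n(ℝ) be a unital matrix algebra. If there is an invertible real matrix C and an index l with the property that E_{ll} ∈ C^{-1}𝒜C (where E_{ll} is a diagonal matrix unit), then 𝒜 is similar to a unital algebra generated by entrywise strictly positive matrices. -/

import Mathlib

open Matrix

lemma aux_Udet (n : ℕ) (l : Fin n) :
    IsUnit (Matrix.of fun i j : Fin n => if i = l then (n:ℝ)⁻¹
      else (if i = j then (1:ℝ) else 0) - (if j = l then 1 else 0)).det := by
  set U : Matrix (Fin n) (Fin n) ℝ := Matrix.of fun i j => if i = l then (n:ℝ)⁻¹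
      else (if i = j then (1:ℝ) else 0) - (if j = l then 1 else 0) with hU
  have hn : (0:ℝ) < n := by exact_mod_cast l.pos
  rw [isUnit_iff_ne_zero]
  intro hdet
  obtain ⟨v, hv0, hv⟩ := Matrix.exists_mulVec_eq_zero_iff.2 hdet
  have hrow : ∀ i, U.mulVec v i = if i = l then (n:ℝ)⁻¹ * ∑ j, v j else v i - v l := by
    intro i
    by_cases hi : i = l
    · subst hi
      simp [Matrix.mulVec, dotProduct, hU, Finset.mul_sum]
    · simp only [Matrix.mulVec, dotProduct, hU, Matrix.of_apply, if_neg hi,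
        sub_mul, ite_mul, one_mul, zero_mul, Finset.sum_sub_distrib]
      simp [hi, Finset.sum_ite_eq, Finset.sum_ite_eq']
  have hvl : ∀ i, i ≠ l → v i = v l := by
    intro i hi
    have := congrFun hv i
    rw [hrow i, if_neg hi] at this
    simpa [sub_eq_zero] using this
  have hsum : ∑ j, v j = 0 := by
    have := congrFun hv l
    rw [hrow l, if_pos rfl] at this
    simpa [Pi.zero_apply, inv_ne_zero (ne_of_gt hn), mul_eq_zero] using this
  have hall : ∀ j, v j = v l := by
    intro j; by_cases hj : j = l
    · rw [hj]
    · exact hvl j hj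
  have : (n : ℝ) * v l = 0 := by
    calc (n:ℝ) * v l = ∑ j : Fin n, v l := by simp [mul_comm]
    _ = ∑ j, v j := Finset.sum_congr rfl fun j _ => (hall j).symm
    _ = 0 := hsum
  have hvl0 : v l = 0 := by
    rcases mul_eq_zero.1 this with h | h
    · exact absurd h (ne_of_gt hn)
    · exact h
  apply hv0
  funext j
  rw [hall j, hvl0, Pi.zero_apply]

lemma aux_intertwine (n : ℕ) (l : Fin n) :
    Matrix.single l l (1:ℝ) * (Matrix.of fun i j : Fin n => if i = l then (n:ℝ)⁻¹
      else (if i = j then (1:ℝ) else 0) - (if j = l then 1 else 0)) =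
    (Matrix.of fun i j : Fin n => if i = l then (n:ℝ)⁻¹
      else (if i = j then (1:ℝ) else 0) - (if j = l then 1 else 0)) *
    (Matrix.of fun _ _ : Fin n => (n:ℝ)⁻¹) := by
  set U : Matrix (Fin n) (Fin n) ℝ := Matrix.of fun i j => if i = l then (n:ℝ)⁻¹
      else (if i = j then (1:ℝ) else 0) - (if j = l then 1 else 0) with hU
  have hn : (0:ℝ) < n := by exact_mod_cast l.pos
  ext i j
  rw [Matrix.mul_apply, Matrix.mul_apply]
  simp only [Matrix.of_apply]
  have hL : ∑ k, Matrix.single l l (1:ℝ) i k * U k j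
      = (if i = l then (1:ℝ) else 0) * U l j := by
    rw [Finset.sum_eq_single l]
    · congr 1
      by_cases hi : i = l <;> simp [Matrix.single, hi, Ne.symm]
    · intro k _ hk
      have : Matrix.single l l (1:ℝ) i k = 0 := by
        simp [Matrix.single]
        exact fun _ h2 => absurd h2.symm hk
      rw [this, zero_mul]
    · simp
  rw [hL]
  by_cases hi : i = l
  · subst hi
    rw [if_pos rfl, one_mul]
    have h1 : ∀ k : Fin n, U i k * (n:ℝ)⁻¹ = (n:ℝ)⁻¹ * (n:ℝ)⁻¹ := fun k => by simp [hU]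
    rw [Finset.sum_congr rfl fun k _ => h1 k, Finset.sum_const, Finset.card_univ,
      Fintype.card_fin, nsmul_eq_mul]
    have h2 : U i j = (n:ℝ)⁻¹ := by simp [hU]
    rw [h2]
    field_simp
  · rw [if_neg hi, zero_mul]
    symm
    have h1 : ∀ k : Fin n, U i k * (n:ℝ)⁻¹
        = ((if i = k then (1:ℝ) else 0) - (if k = l then 1 else 0)) * (n:ℝ)⁻¹ :=
      fun k => by simp [hU, hi]
    rw [Finset.sum_congr rfl fun k _ => h1 k]
    simp only [sub_mul, ite_mul, one_mul, zero_mul, Finset.sum_sub_distrib]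
    simp

/-- If some conjugate of a unital matrix algebra `𝒜` contains a diagonal matrix unit
`E_{ll}`, then `𝒜` is similar to an algebra generated by entrywise strictly positive
matrices. -/
theorem stmt8 (n : ℕ) (𝒜 : Subalgebra ℝ (Matrix (Fin n) (Fin n) ℝ))
    (h : ∃ C : Matrix (Fin n) (Fin n) ℝ, IsUnit C.det ∧ ∃ l : Fin n,
      ∃ X ∈ 𝒜, C⁻¹ * X * C = Matrix.single l l (1 : ℝ)) :
    ∃ D : Matrix (Fin n) (Fin n) ℝ, IsUnit D.det ∧
      ∃ S : Set (Matrix (Fin n) (Fin n) ℝ), (∀ B ∈ S, ∀ i j, 0 < B i j) ∧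
        ∀ X, X ∈ Algebra.adjoin ℝ S ↔ ∃ Y ∈ 𝒜, X = D⁻¹ * Y * D := by
  obtain ⟨C, hC, l, X, hX, hXE⟩ := h
  have hn : (0:ℝ) < n := by exact_mod_cast l.pos
  set U : Matrix (Fin n) (Fin n) ℝ := Matrix.of fun i j => if i = l then (n:ℝ)⁻¹
      else (if i = j then (1:ℝ) else 0) - (if j = l then 1 else 0) with hU
  set Q : Matrix (Fin n) (Fin n) ℝ := Matrix.of fun _ _ => (n:ℝ)⁻¹ with hQdef
  have hUdet : IsUnit U.det := aux_Udet n l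
  set D : Matrix (Fin n) (Fin n) ℝ := C * U with hDdef
  have hD : IsUnit D.det := by rw [hDdef, Matrix.det_mul]; exact hC.mul hUdet
  have hDinv : D⁻¹ = U⁻¹ * C⁻¹ := Matrix.mul_inv_rev C U
  have hDD : D * D⁻¹ = 1 := Matrix.mul_nonsing_inv D hD
  have hDDi : D⁻¹ * D = 1 := Matrix.nonsing_inv_mul D hD
  -- the conjugate of X is the strictly positive rank-one idempotent Q
  have hQ : D⁻¹ * X * D = Q := by
    have h1 : D⁻¹ * X * D = U⁻¹ * (C⁻¹ * X * C * U) := by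
      rw [hDinv, hDdef]; simp only [Matrix.mul_assoc]
    rw [h1, hXE, aux_intertwine n l, ← hU, ← hQdef, ← Matrix.mul_assoc,
      Matrix.nonsing_inv_mul U hUdet, one_mul]
  -- the conjugated algebra
  set ℬ : Subalgebra ℝ (Matrix (Fin n) (Fin n) ℝ) :=
    { carrier := {M | ∃ Y ∈ 𝒜, M = D⁻¹ * Y * D}
      mul_mem' := by
        rintro a b ⟨Y, hY, rfl⟩ ⟨Z, hZ, rfl⟩
        refine ⟨Y * Z, mul_mem hY hZ, ?_⟩
        have h2 : D * (D⁻¹ * (Z * D)) = Z * D := by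
          rw [← Matrix.mul_assoc, hDD, one_mul]
        simp only [Matrix.mul_assoc]
        rw [h2]
      add_mem' := by
        rintro a b ⟨Y, hY, rfl⟩ ⟨Z, hZ, rfl⟩
        exact ⟨Y + Z, add_mem hY hZ, by rw [Matrix.mul_add, Matrix.add_mul]⟩
      algebraMap_mem' := by
        intro r
        refine ⟨algebraMap ℝ _ r, Subalgebra.algebraMap_mem 𝒜 r, ?_⟩
        rw [Algebra.algebraMap_eq_smul_one, Matrix.mul_smul, Matrix.smul_mul,
          mul_one, hDDi] } with hBdef
  have hQB : Q ∈ ℬ := ⟨X, hX, hQ.symm⟩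
  -- scaling factors
  set ε : Matrix (Fin n) (Fin n) ℝ → ℝ :=
    fun B => (n:ℝ)⁻¹ / (1 + ∑ i, ∑ j, |B i j|) with hεdef
  have hsum_nonneg : ∀ B : Matrix (Fin n) (Fin n) ℝ, 0 ≤ ∑ i, ∑ j, |B i j| :=
    fun B => Finset.sum_nonneg fun i _ => Finset.sum_nonneg fun j _ => abs_nonneg _
  have hεpos : ∀ B, 0 < ε B := by
    intro B
    have := hsum_nonneg B
    rw [hεdef]
    positivity
  have habs : ∀ (B : Matrix (Fin n) (Fin n) ℝ) i j, |B i j| ≤ ∑ i, ∑ j, |B i j| := by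
    intro B i j
    calc |B i j| ≤ ∑ j, |B i j| :=
          Finset.single_le_sum (fun k _ => abs_nonneg (B i k)) (Finset.mem_univ j)
    _ ≤ ∑ i, ∑ j, |B i j| :=
          Finset.single_le_sum (fun k (_ : k ∈ Finset.univ) =>
            Finset.sum_nonneg fun m _ => abs_nonneg (B k m)) (Finset.mem_univ i)
  have hkey : ∀ (B : Matrix (Fin n) (Fin n) ℝ) i j, 0 < (n:ℝ)⁻¹ + ε B * B i j := by
    intro B i j
    set s := ∑ i, ∑ j, |B i j| with hs
    have hs0 : 0 ≤ s := hsum_nonneg B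
    have hcancel : ε B * (1 + s) = (n:ℝ)⁻¹ := by
      rw [hεdef]
      field_simp
      rw [← hs]
    have h1 : ε B * |B i j| < (n:ℝ)⁻¹ := by
      have h2 : ε B * |B i j| ≤ ε B * s :=
        mul_le_mul_of_nonneg_left (habs B i j) (le_of_lt (hεpos B))
      have h3 : ε B * s < ε B * (1 + s) := by
        have := hεpos B
        nlinarith
      linarith
    have h4 : |ε B * B i j| = ε B * |B i j| := by
      rw [abs_mul, abs_of_pos (hεpos B)]
    have h5 := neg_abs_le (ε B * B i j)
    linarith
  -- the generating set
  set S : Set (Matrix (Fin n) (Fin n) ℝ) :=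
    (fun B => Q + ε B • B) '' (ℬ : Set (Matrix (Fin n) (Fin n) ℝ)) with hSdef
  refine ⟨D, hD, S, ?_, ?_⟩
  · rintro M ⟨B, _, rfl⟩ i j
    show 0 < (Q + ε B • B) i j
    have : (Q + ε B • B) i j = (n:ℝ)⁻¹ + ε B * B i j := by
      simp [hQdef, Matrix.add_apply, Matrix.smul_apply, smul_eq_mul]
    rw [this]
    exact hkey B i j
  · have hadj : Algebra.adjoin ℝ S = ℬ := by
      apply le_antisymm
      · apply Algebra.adjoin_le
        rintro M ⟨B, hB, rfl⟩
        exact add_mem hQB (Subalgebra.smul_mem ℬ hB (ε B))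
      · intro B hB
        have hQS : Q ∈ Algebra.adjoin ℝ S := by
          apply Algebra.subset_adjoin
          refine ⟨0, ℬ.zero_mem, ?_⟩
          simp
        have hfB : Q + ε B • B ∈ Algebra.adjoin ℝ S :=
          Algebra.subset_adjoin ⟨B, hB, rfl⟩
        have hsB : ε B • B ∈ Algebra.adjoin ℝ S := by
          have := sub_mem hfB hQS
          simpa using this
        have hBe : B = (ε B)⁻¹ • (ε B • B) := by
          rw [smul_smul, inv_mul_cancel₀ (ne_of_gt (hεpos B)), one_smul]
        rw [hBe]
        exact Subalgebra.smul_mem _ hsB _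
    intro X'
    rw [hadj]
    exact Iff.rfl
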